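/- The principal pivot transform is an involution: if A is a square matrix over a field and A[T] is invertible, then (A*T)[T] is invertible and (A*T)*T = A. -/

import Mathlib

open Matrix

/-- The principal pivot transform `A * T` of a square matrix `A` on the set
`T = {i | p i}` of indices: writing `A` in block form `(P Q; R S)` with
`P = A[T]`, the principal pivot transform is
`(P⁻¹, -P⁻¹Q; RP⁻¹, S - RP⁻¹Q)`. -/
noncomputable def ppt {V : Type*} [Fintype V] [DecidableEq V] {F : Type*} [Field F]
    (A : Matrix V V F) (p : V → Prop) [DecidablePred p] : Matrix V V F :=
  let P := A.submatrix (fun i : {x // p x} => (i : V)) (fun i : {x // p x} => (i : V))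
  let Q := A.submatrix (fun i : {x // p x} => (i : V)) (fun i : {x // ¬ p x} => (i : V))
  let R := A.submatrix (fun i : {x // ¬ p x} => (i : V)) (fun i : {x // p x} => (i : V))
  let S := A.submatrix (fun i : {x // ¬ p x} => (i : V)) (fun i : {x // ¬ p x} => (i : V))
  (Matrix.fromBlocks P⁻¹ (-(P⁻¹ * Q)) (R * P⁻¹) (S - R * P⁻¹ * Q)).submatrix
    (Equiv.sumCompl p).symm (Equiv.sumCompl p).symm

set_option linter.unusedSectionVars false
section aux
variable {V : Type*} [Fintype V] [DecidableEq V] {F : Type*} [Field F]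
  (p : V → Prop) [DecidablePred p]

lemma blocks_pp (M : Matrix ({x // p x} ⊕ {x // ¬ p x}) ({x // p x} ⊕ {x // ¬ p x}) F) :
    (M.submatrix (Equiv.sumCompl p).symm (Equiv.sumCompl p).symm).submatrix
      (fun i : {x // p x} => (i : V)) (fun i : {x // p x} => (i : V))
      = M.submatrix Sum.inl Sum.inl := by
  ext i j
  simp [Matrix.submatrix_apply, Equiv.sumCompl_symm_apply_of_pos i.2,
    Equiv.sumCompl_symm_apply_of_pos j.2]

lemma blocks_pn (M : Matrix ({x // p x} ⊕ {x // ¬ p x}) ({x // p x} ⊕ {x // ¬ p x}) F) :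
    (M.submatrix (Equiv.sumCompl p).symm (Equiv.sumCompl p).symm).submatrix
      (fun i : {x // p x} => (i : V)) (fun i : {x // ¬ p x} => (i : V))
      = M.submatrix Sum.inl Sum.inr := by
  ext i j
  simp [Matrix.submatrix_apply, Equiv.sumCompl_symm_apply_of_pos i.2,
    Equiv.sumCompl_symm_apply_of_neg j.2]

lemma blocks_np (M : Matrix ({x // p x} ⊕ {x // ¬ p x}) ({x // p x} ⊕ {x // ¬ p x}) F) :
    (M.submatrix (Equiv.sumCompl p).symm (Equiv.sumCompl p).symm).submatrix
      (fun i : {x // ¬ p x} => (i : V)) (fun i : {x // p x} => (i : V))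
      = M.submatrix Sum.inr Sum.inl := by
  ext i j
  simp [Matrix.submatrix_apply, Equiv.sumCompl_symm_apply_of_neg i.2,
    Equiv.sumCompl_symm_apply_of_pos j.2]

lemma blocks_nn (M : Matrix ({x // p x} ⊕ {x // ¬ p x}) ({x // p x} ⊕ {x // ¬ p x}) F) :
    (M.submatrix (Equiv.sumCompl p).symm (Equiv.sumCompl p).symm).submatrix
      (fun i : {x // ¬ p x} => (i : V)) (fun i : {x // ¬ p x} => (i : V))
      = M.submatrix Sum.inr Sum.inr := by
  ext i j
  simp [Matrix.submatrix_apply, Equiv.sumCompl_symm_apply_of_neg i.2,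
    Equiv.sumCompl_symm_apply_of_neg j.2]

end aux

/-- The principal pivot transform is an involution: if `A[T]` is invertible,
then `(A*T)[T]` is invertible and `(A*T)*T = A`. -/
theorem ppt_involutive {V : Type*} [Fintype V] [DecidableEq V]
    {F : Type*} [Field F] (A : Matrix V V F) (p : V → Prop) [DecidablePred p]
    (h : IsUnit (A.submatrix (fun i : {x // p x} => (i : V))
      (fun i : {x // p x} => (i : V))).det) :
    IsUnit ((ppt A p).submatrix (fun i : {x // p x} => (i : V))
      (fun i : {x // p x} => (i : V))).det ∧
    ppt (ppt A p) p = A := by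
  set P := A.submatrix (fun i : {x // p x} => (i : V)) (fun i : {x // p x} => (i : V)) with hP
  set Q := A.submatrix (fun i : {x // p x} => (i : V)) (fun i : {x // ¬ p x} => (i : V)) with hQ
  set R := A.submatrix (fun i : {x // ¬ p x} => (i : V)) (fun i : {x // p x} => (i : V)) with hR
  set S := A.submatrix (fun i : {x // ¬ p x} => (i : V)) (fun i : {x // ¬ p x} => (i : V)) with hS
  have hppt : ppt A p = (Matrix.fromBlocks P⁻¹ (-(P⁻¹ * Q)) (R * P⁻¹) (S - R * P⁻¹ * Q)).submatrix
      (Equiv.sumCompl p).symm (Equiv.sumCompl p).symm := rfl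
  have hP' : (ppt A p).submatrix (fun i : {x // p x} => (i : V)) (fun i : {x // p x} => (i : V))
      = P⁻¹ := by rw [hppt, blocks_pp]; rfl
  have hQ' : (ppt A p).submatrix (fun i : {x // p x} => (i : V)) (fun i : {x // ¬ p x} => (i : V))
      = -(P⁻¹ * Q) := by rw [hppt, blocks_pn]; rfl
  have hR' : (ppt A p).submatrix (fun i : {x // ¬ p x} => (i : V)) (fun i : {x // p x} => (i : V))
      = R * P⁻¹ := by rw [hppt, blocks_np]; rfl
  have hS' : (ppt A p).submatrix (fun i : {x // ¬ p x} => (i : V)) (fun i : {x // ¬ p x} => (i : V))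
      = S - R * P⁻¹ * Q := by rw [hppt, blocks_nn]; rfl
  have hdet : IsUnit (P⁻¹).det := (Matrix.isUnit_nonsing_inv_det P h)
  refine ⟨hP' ▸ hdet, ?_⟩
  have h2 : ppt (ppt A p) p = (Matrix.fromBlocks
      ((ppt A p).submatrix (fun i : {x // p x} => (i : V)) (fun i : {x // p x} => (i : V)))⁻¹
      (-(((ppt A p).submatrix (fun i : {x // p x} => (i : V)) (fun i : {x // p x} => (i : V)))⁻¹ *
        ((ppt A p).submatrix (fun i : {x // p x} => (i : V)) (fun i : {x // ¬ p x} => (i : V)))))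
      (((ppt A p).submatrix (fun i : {x // ¬ p x} => (i : V)) (fun i : {x // p x} => (i : V))) *
        ((ppt A p).submatrix (fun i : {x // p x} => (i : V)) (fun i : {x // p x} => (i : V)))⁻¹)
      (((ppt A p).submatrix (fun i : {x // ¬ p x} => (i : V)) (fun i : {x // ¬ p x} => (i : V))) -
        ((ppt A p).submatrix (fun i : {x // ¬ p x} => (i : V)) (fun i : {x // p x} => (i : V))) *
        ((ppt A p).submatrix (fun i : {x // p x} => (i : V)) (fun i : {x // p x} => (i : V)))⁻¹ *
        ((ppt A p).submatrix (fun i : {x // p x} => (i : V)) (fun i : {x // ¬ p x} => (i : V))))).submatrix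
      (Equiv.sumCompl p).symm (Equiv.sumCompl p).symm := rfl
  rw [h2, hP', hQ', hR', hS']
  have hinv : P⁻¹⁻¹ = P := Matrix.nonsing_inv_nonsing_inv P h
  have hPPinv : P * P⁻¹ = 1 := Matrix.mul_nonsing_inv P h
  have hPinvP : P⁻¹ * P = 1 := Matrix.nonsing_inv_mul P h
  rw [hinv]
  have b2 : -(P * -(P⁻¹ * Q)) = Q := by
    rw [Matrix.mul_neg, neg_neg, ← Matrix.mul_assoc, hPPinv, Matrix.one_mul]
  have b3 : R * P⁻¹ * P = R := by rw [Matrix.mul_assoc, hPinvP, Matrix.mul_one]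
  have b4 : S - R * P⁻¹ * Q - R * P⁻¹ * P * -(P⁻¹ * Q) = S := by
    rw [b3, Matrix.mul_neg, sub_neg_eq_add, ← Matrix.mul_assoc, sub_add_cancel]
  rw [b2, b4, b3]
  ext i j
  by_cases hi : p i <;> by_cases hj : p j <;>
    simp [Matrix.submatrix_apply, Equiv.sumCompl_symm_apply_of_pos, Equiv.sumCompl_symm_apply_of_neg,
      hi, hj, hP, hQ, hR, hS]
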